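/- For all complex Z1, Z2, Z3, Z4 with |Zj| < 1 for each j, the polynomial Q(Z) = 1 - (3/8)(Z1+Z2+Z3+Z4) + (1/8)(Z1Z2Z3 + Z1Z2Z4 + Z1Z3Z4 + Z2Z3Z4) is nonzero. -/

import Mathlib

set_option maxHeartbeats 1000000
lemma key_rhp (v1 v2 v3 v4 : ℂ) (h1 : 0 < v1.re) (h2 : 0 < v2.re)
    (h3 : 0 < v3.re) (h4 : 0 < v4.re) :
    1 + 2*(v1+v2+v3+v4)
      + 2*(v1*v2+v1*v3+v1*v4+v2*v3+v2*v4+v3*v4) ≠ 0 := by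
  intro hF
  obtain ⟨a1, b1⟩ := v1
  obtain ⟨a2, b2⟩ := v2
  obtain ⟨a3, b3⟩ := v3
  obtain ⟨a4, b4⟩ := v4
  rw [Complex.ext_iff] at hF
  obtain ⟨hre, him⟩ := hF
  simp only [Complex.add_re, Complex.add_im, Complex.mul_re, Complex.mul_im,
    Complex.one_re, Complex.one_im, Complex.re_ofNat, Complex.im_ofNat,
    Complex.zero_re, Complex.zero_im] at hre him h1 h2 h3 h4
  set s : ℝ := a1 + a2 + a3 + a4 with hs
  set t : ℝ := b1 + b2 + b3 + b4 with ht
  set A : ℝ := a1^2+a2^2+a3^2+a4^2 with hA'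
  set B : ℝ := b1^2+b2^2+b3^2+b4^2 with hB'
  have hre' : (1+s)^2 - A + B - t^2 = 0 := by
    rw [hs, ht, hA', hB']; linear_combination hre
  have him' : (1+s)*t = a1*b1+a2*b2+a3*b3+a4*b4 := by
    rw [hs, ht]; linear_combination (1/2 : ℝ) * him
  have hCS : ((1+s)*t)^2 ≤ A*B := by
    rw [him', hA', hB']
    have hLag : (a1^2+a2^2+a3^2+a4^2)*(b1^2+b2^2+b3^2+b4^2)
        - (a1*b1+a2*b2+a3*b3+a4*b4)^2
        = (a1*b2-a2*b1)^2 + (a1*b3-a3*b1)^2 + (a1*b4-a4*b1)^2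
          + (a2*b3-a3*b2)^2 + (a2*b4-a4*b2)^2 + (a3*b4-a4*b3)^2 := by ring
    nlinarith [sq_nonneg (a1*b2-a2*b1), sq_nonneg (a1*b3-a3*b1), sq_nonneg (a1*b4-a4*b1),
      sq_nonneg (a2*b3-a3*b2), sq_nonneg (a2*b4-a4*b2), sq_nonneg (a3*b4-a4*b3), hLag]
  have hCS' : (1+s)^2*t^2 ≤ A*B := by rw [← mul_pow]; exact hCS
  have hA : A < (1+s)^2 := by
    rw [hA', hs]
    have hexp : (1+(a1+a2+a3+a4))^2 - (a1^2+a2^2+a3^2+a4^2)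
        = 1 + 2*(a1+a2+a3+a4)
          + 2*(a1*a2+a1*a3+a1*a4+a2*a3+a2*a4+a3*a4) := by ring
    nlinarith [mul_pos h1 h2, mul_pos h1 h3, mul_pos h1 h4, mul_pos h2 h3,
      mul_pos h2 h4, mul_pos h3 h4, hexp]
  have hB : (0:ℝ) ≤ B := by rw [hB']; positivity
  have hs0 : 0 < s := by rw [hs]; linarith
  have hfact : ((1+s)^2 - A)*((1+s)^2 + B)
      = (1+s)^2*t^2 - A*B + (1+s)^2*((1+s)^2 - A + B - t^2) := by ring
  have hsq1 : 0 < (1+s)^2 := pow_pos (by linarith) 2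
  have hpos : 0 < ((1+s)^2 - A)*((1+s)^2 + B) :=
    mul_pos (by linarith) (by linarith)
  rw [hfact, hre'] at hpos
  linarith

lemma re_inv_gt_half (Z : ℂ) (h : ‖Z‖ < 1) : 0 < ((1 - Z)⁻¹ - 1/2).re := by
  have hw : (1 - Z) ≠ 0 := by
    intro h0
    have : Z = 1 := by linear_combination -h0
    simp [this] at h
  have hsq : Z.re^2 + Z.im^2 < 1 := by
    have h1 := Complex.sq_norm Z
    rw [Complex.normSq_apply] at h1
    nlinarith [norm_nonneg Z]
  have hw2 : 0 < Complex.normSq (1 - Z) := Complex.normSq_pos.mpr hw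
  have hns : Complex.normSq (1 - Z) = (1 - Z.re)^2 + Z.im^2 := by
    simp [Complex.normSq_apply, Complex.sub_re, Complex.sub_im]; ring
  have hre : ((1 - Z)⁻¹ - 1/2).re = (1 - Z.re) / Complex.normSq (1 - Z) - 1/2 := by
    simp [Complex.sub_re, Complex.inv_re, Complex.one_re]
  rw [hre, sub_pos, lt_div_iff₀ hw2, hns]
  nlinarith

theorem stmt_5 (Z1 Z2 Z3 Z4 : ℂ) (h1 : ‖Z1‖ < 1) (h2 : ‖Z2‖ < 1)
    (h3 : ‖Z3‖ < 1) (h4 : ‖Z4‖ < 1) :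
    1 - (3/8 : ℂ) * (Z1 + Z2 + Z3 + Z4)
      + (1/8 : ℂ) * (Z1*Z2*Z3 + Z1*Z2*Z4 + Z1*Z3*Z4 + Z2*Z3*Z4) ≠ 0 := by
  have hw1 : (1 - Z1) ≠ 0 := by
    intro h0; have : Z1 = 1 := by linear_combination -h0
    simp [this] at h1
  have hw2 : (1 - Z2) ≠ 0 := by
    intro h0; have : Z2 = 1 := by linear_combination -h0
    simp [this] at h2
  have hw3 : (1 - Z3) ≠ 0 := by
    intro h0; have : Z3 = 1 := by linear_combination -h0
    simp [this] at h3
  have hw4 : (1 - Z4) ≠ 0 := by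
    intro h0; have : Z4 = 1 := by linear_combination -h0
    simp [this] at h4
  set v1 := (1 - Z1)⁻¹ - 1/2 with hv1
  set v2 := (1 - Z2)⁻¹ - 1/2 with hv2
  set v3 := (1 - Z3)⁻¹ - 1/2 with hv3
  set v4 := (1 - Z4)⁻¹ - 1/2 with hv4
  have hc1 : (1 - Z1) * v1 = (1 + Z1)/2 := by
    rw [hv1, mul_sub, mul_inv_cancel₀ hw1]; ring
  have hc2 : (1 - Z2) * v2 = (1 + Z2)/2 := by
    rw [hv2, mul_sub, mul_inv_cancel₀ hw2]; ring
  have hc3 : (1 - Z3) * v3 = (1 + Z3)/2 := by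
    rw [hv3, mul_sub, mul_inv_cancel₀ hw3]; ring
  have hc4 : (1 - Z4) * v4 = (1 + Z4)/2 := by
    rw [hv4, mul_sub, mul_inv_cancel₀ hw4]; ring
  have hkey := key_rhp v1 v2 v3 v4 (re_inv_gt_half Z1 h1) (re_inv_gt_half Z2 h2)
    (re_inv_gt_half Z3 h3) (re_inv_gt_half Z4 h4)
  intro hQ
  apply hkey
  have hT : (1-Z1)*(1-Z2)*(1-Z3)*(1-Z4)
      * (1 + 2*(v1+v2+v3+v4)
        + 2*(v1*v2+v1*v3+v1*v4+v2*v3+v2*v4+v3*v4))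
      = 8 * (1 - (3/8 : ℂ) * (Z1 + Z2 + Z3 + Z4)
        + (1/8 : ℂ) * (Z1*Z2*Z3 + Z1*Z2*Z4 + Z1*Z3*Z4 + Z2*Z3*Z4)) := by
    linear_combination
      (2*(1-Z2)*(1-Z3)*(1-Z4) + 2*(1-Z3)*(1-Z4)*((1+Z2)/2)
        + 2*(1-Z2)*(1-Z4)*((1+Z3)/2) + 2*(1-Z2)*(1-Z3)*((1+Z4)/2)) * hc1
      + (2*(1-Z1)*(1-Z3)*(1-Z4) + 2*(1-Z3)*(1-Z4)*((1-Z1)*v1)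
        + 2*(1-Z1)*(1-Z4)*((1+Z3)/2) + 2*(1-Z1)*(1-Z3)*((1+Z4)/2)) * hc2
      + (2*(1-Z1)*(1-Z2)*(1-Z4) + 2*(1-Z2)*(1-Z4)*((1-Z1)*v1)
        + 2*(1-Z1)*(1-Z4)*((1-Z2)*v2) + 2*(1-Z1)*(1-Z2)*((1+Z4)/2)) * hc3
      + (2*(1-Z1)*(1-Z2)*(1-Z3) + 2*(1-Z2)*(1-Z3)*((1-Z1)*v1)
        + 2*(1-Z1)*(1-Z3)*((1-Z2)*v2) + 2*(1-Z1)*(1-Z2)*((1-Z3)*v3)) * hc4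
  rw [hQ, mul_zero] at hT
  have hprod : (1-Z1)*(1-Z2)*(1-Z3)*(1-Z4) ≠ 0 := by
    exact mul_ne_zero (mul_ne_zero (mul_ne_zero hw1 hw2) hw3) hw4
  exact (mul_eq_zero.mp hT).resolve_left hprod
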